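/- Let (X, {A_x}_{x∈X}, 𝒜) and (X, {B_x}_{x∈X}, ℬ) be continuous fields of C*-algebras over the same compact Hausdorff space X, and let (φ_x : A_x → B_x)_{x∈X} be a family of *-homomorphisms. Consider the statements: (i) the map φ : 𝒜 → ℬ, a ↦ (x ↦ φ_x(a(x))), is a well-defined continuous field morphism; (ii) for every x ∈ X, every finite set F ⊆ 𝒜 and every ε > 0 there exist an open neighborhood V of x and a continuous field morphism χ : 𝒜 → ℬ such that ‖φ_v(a(v)) − χ(a)(v)‖ < ε for all a ∈ F and all v ∈ V; (iii) the map X → ⨆_{x∈X} Hom_{C*}(A_x, B_x), x ↦ (φ_x, x), is continuous with respect to τ_{(𝒜→ℬ)}. Then (i) and (ii) are equivalent and each implies (iii); moreover, if Hom_{F_{C*}}(𝒜, ℬ) satisfies the projective property (PP), then (iii) implies (ii) (hence all three statements are equivalent). -/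

import Mathlib

/-- A continuous field of C*-algebras over a topological space `X`, in the sense of
Definition 2.1: `𝓐` is a set of sections of the family `{A x}` which is a C*-algebra
under pointwise operations and the supremum norm (encoded by closure under the
*-algebra operations, boundedness of sections, and completeness, i.e. closure under
uniform approximation); evaluation at each point is surjective; the norm functions
of sections are continuous; and `𝓐` is stable under `C(X)`-multiplication. -/
structure IsContinuousField {X : Type*} [TopologicalSpace X]
    {A : X → Type*} [∀ x, NormedRing (A x)] [∀ x, StarRing (A x)]
    [∀ x, CStarRing (A x)] [∀ x, NormedAlgebra ℂ (A x)] [∀ x, StarModule ℂ (A x)]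
    [∀ x, CompleteSpace (A x)] (𝓐 : Set (Π x, A x)) : Prop where
  zero_mem : (0 : Π x, A x) ∈ 𝓐
  add_mem : ∀ a ∈ 𝓐, ∀ b ∈ 𝓐, a + b ∈ 𝓐
  neg_mem : ∀ a ∈ 𝓐, -a ∈ 𝓐
  smul_mem : ∀ (c : ℂ), ∀ a ∈ 𝓐, c • a ∈ 𝓐
  mul_mem : ∀ a ∈ 𝓐, ∀ b ∈ 𝓐, a * b ∈ 𝓐
  star_mem : ∀ a ∈ 𝓐, star a ∈ 𝓐
  norm_bdd : ∀ a ∈ 𝓐, ∃ M : ℝ, ∀ x, ‖a x‖ ≤ M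
  uniformly_closed : ∀ a : Π x, A x,
    (∀ ε > (0 : ℝ), ∃ c ∈ 𝓐, ∀ x, ‖a x - c x‖ < ε) → a ∈ 𝓐
  eval_surjective : ∀ (x : X) (ξ : A x), ∃ a ∈ 𝓐, a x = ξ
  norm_continuous : ∀ a ∈ 𝓐, Continuous fun x => ‖a x‖
  contMul_mem : ∀ (l : C(X, ℂ)), ∀ a ∈ 𝓐, (fun x => l x • a x) ∈ 𝓐

/-- The topology `τ_𝓐` on the total space `⨆ₓ A x`, generated by the basic sets
`V_ε^c = {(ξ, x) | x ∈ V, ‖ξ - c x‖ < ε}` for `V ⊆ X` open, `c ∈ 𝓐` and `ε > 0`. -/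
def fieldTopology {X : Type*} [TopologicalSpace X]
    {A : X → Type*} [∀ x, NormedRing (A x)] (𝓐 : Set (Π x, A x)) :
    TopologicalSpace (Σ x, A x) :=
  TopologicalSpace.generateFrom
    { S | ∃ (V : Set X) (c : Π x, A x) (ε : ℝ), IsOpen V ∧ c ∈ 𝓐 ∧ 0 < ε ∧
        S = { p : Σ x, A x | p.1 ∈ V ∧ ‖p.2 - c p.1‖ < ε } }

section HomBundle

variable {X : Type*} [TopologicalSpace X] {A B : X → Type*}
  [∀ x, NormedRing (A x)] [∀ x, StarRing (A x)] [∀ x, CStarRing (A x)]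
  [∀ x, NormedAlgebra ℂ (A x)] [∀ x, StarModule ℂ (A x)] [∀ x, CompleteSpace (A x)]
  [∀ x, NormedRing (B x)] [∀ x, StarRing (B x)] [∀ x, CStarRing (B x)]
  [∀ x, NormedAlgebra ℂ (B x)] [∀ x, StarModule ℂ (B x)] [∀ x, CompleteSpace (B x)]

/-- A family of fiberwise *-homomorphisms is (the family induced by) a continuous field
morphism `𝓐 → 𝓑` precisely when it sends every section of `𝓐` to a section of `𝓑`. -/
def IsFieldMorphismFamily (𝓐 : Set (Π x, A x)) (𝓑 : Set (Π x, B x))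
    (χ : Π x, A x →⋆ₙₐ[ℂ] B x) : Prop :=
  ∀ a ∈ 𝓐, (fun x => χ x (a x)) ∈ 𝓑

/-- The topology `τ_{(𝓐 → 𝓑)}` on the Hom-bundle `⨆ₓ Hom_{C*}(A x, B x)`, generated by
the basic sets `V_{(F,ε)}^χ = {(ξ, x) | x ∈ V, ‖ξ (a x) - χ x (a x)‖ < ε for all a ∈ F}`
where `V ⊆ X` is open, `χ` is a continuous field morphism `𝓐 → 𝓑`, `F ⊆ 𝓐` is finite
and `ε > 0`. -/
def homBundleTopology (𝓐 : Set (Π x, A x)) (𝓑 : Set (Π x, B x)) :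
    TopologicalSpace (Σ x, A x →⋆ₙₐ[ℂ] B x) :=
  TopologicalSpace.generateFrom
    { S | ∃ (V : Set X) (χ : Π x, A x →⋆ₙₐ[ℂ] B x) (F : Finset (Π x, A x)) (ε : ℝ),
        IsOpen V ∧ IsFieldMorphismFamily 𝓐 𝓑 χ ∧ ↑F ⊆ 𝓐 ∧ 0 < ε ∧
        S = { p : Σ x, A x →⋆ₙₐ[ℂ] B x |
                p.1 ∈ V ∧ ∀ a ∈ F, ‖p.2 (a p.1) - χ p.1 (a p.1)‖ < ε } }

/-- The projective property (PP): every fiberwise *-homomorphism `A x → B x` is the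
fiber at `x` of some continuous field morphism `𝓐 → 𝓑`. -/
def ProjectiveProperty (𝓐 : Set (Π x, A x)) (𝓑 : Set (Π x, B x)) : Prop :=
  ∀ (x : X) (ξ : A x →⋆ₙₐ[ℂ] B x),
    ∃ χ : Π x, A x →⋆ₙₐ[ℂ] B x, IsFieldMorphismFamily 𝓐 𝓑 χ ∧ χ x = ξ

end HomBundle


lemma aux_finsetSum_mem {X : Type*} [TopologicalSpace X] {B : X → Type*}
    [∀ x, NormedRing (B x)] [∀ x, StarRing (B x)] [∀ x, CStarRing (B x)]
    [∀ x, NormedAlgebra ℂ (B x)] [∀ x, StarModule ℂ (B x)] [∀ x, CompleteSpace (B x)]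
    {𝓑 : Set (Π x, B x)} (h𝓑 : IsContinuousField 𝓑) {ι : Type*} (s : Finset ι)
    (g : ι → Π x, B x) (hg : ∀ i ∈ s, g i ∈ 𝓑) :
    (fun x => ∑ i ∈ s, g i x) ∈ 𝓑 := by
  classical
  induction s using Finset.induction_on with
  | empty => simpa using (show (fun x => (0 : B x)) ∈ 𝓑 from h𝓑.zero_mem)
  | @insert j s' hj ih =>
    have h1 : (fun x => ∑ i ∈ insert j s', g i x) =
        g j + fun x => ∑ i ∈ s', g i x := by
      funext x; simp [Finset.sum_insert hj]
    rw [h1]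
    exact h𝓑.add_mem _ (hg j (Finset.mem_insert_self j s'))
      _ (ih fun i hi => hg i (Finset.mem_insert_of_mem hi))

/-- **Continuity criterion for continuous field morphisms** (Proposition 3.7). For a
family `(φ x)` of fiberwise *-homomorphisms between continuous fields of C*-algebras
over a compact Hausdorff space: (i) being a continuous field morphism and (ii) the local
approximation criterion are equivalent, and each implies (iii) continuity of
`x ↦ (φ x, x)` with respect to `τ_{(𝓐 → 𝓑)}`; moreover, if `Hom_{F_{C*}}(𝓐, 𝓑)` has the
projective property (PP), then (iii) implies (ii), so all three are equivalent. -/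
theorem morphism_continuity_criterion {X : Type*} [TopologicalSpace X] [CompactSpace X]
    [T2Space X] {A B : X → Type*}
    [∀ x, NormedRing (A x)] [∀ x, StarRing (A x)] [∀ x, CStarRing (A x)]
    [∀ x, NormedAlgebra ℂ (A x)] [∀ x, StarModule ℂ (A x)] [∀ x, CompleteSpace (A x)]
    [∀ x, NormedRing (B x)] [∀ x, StarRing (B x)] [∀ x, CStarRing (B x)]
    [∀ x, NormedAlgebra ℂ (B x)] [∀ x, StarModule ℂ (B x)] [∀ x, CompleteSpace (B x)]
    (𝓐 : Set (Π x, A x)) (𝓑 : Set (Π x, B x))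
    (h𝓐 : IsContinuousField 𝓐) (h𝓑 : IsContinuousField 𝓑)
    (φ : Π x, A x →⋆ₙₐ[ℂ] B x) :
    (IsFieldMorphismFamily 𝓐 𝓑 φ ↔
      (∀ (x : X) (F : Finset (Π x, A x)), ↑F ⊆ 𝓐 → ∀ ε > (0 : ℝ),
        ∃ V : Set X, IsOpen V ∧ x ∈ V ∧
          ∃ χ : Π x, A x →⋆ₙₐ[ℂ] B x, IsFieldMorphismFamily 𝓐 𝓑 χ ∧
            ∀ v ∈ V, ∀ a ∈ F, ‖φ v (a v) - χ v (a v)‖ < ε)) ∧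
    (IsFieldMorphismFamily 𝓐 𝓑 φ →
      @Continuous X (Σ x, A x →⋆ₙₐ[ℂ] B x) _ (homBundleTopology 𝓐 𝓑)
        (fun x => ⟨x, φ x⟩)) ∧
    (ProjectiveProperty 𝓐 𝓑 →
      @Continuous X (Σ x, A x →⋆ₙₐ[ℂ] B x) _ (homBundleTopology 𝓐 𝓑)
        (fun x => ⟨x, φ x⟩) →
      (∀ (x : X) (F : Finset (Π x, A x)), ↑F ⊆ 𝓐 → ∀ ε > (0 : ℝ),
        ∃ V : Set X, IsOpen V ∧ x ∈ V ∧
          ∃ χ : Π x, A x →⋆ₙₐ[ℂ] B x, IsFieldMorphismFamily 𝓐 𝓑 χ ∧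
            ∀ v ∈ V, ∀ a ∈ F, ‖φ v (a v) - χ v (a v)‖ < ε)) := by
  classical
  -- (ii) → (i)
  have key21 : (∀ (x : X) (F : Finset (Π x, A x)), ↑F ⊆ 𝓐 → ∀ ε > (0 : ℝ),
      ∃ V : Set X, IsOpen V ∧ x ∈ V ∧
        ∃ χ : Π x, A x →⋆ₙₐ[ℂ] B x, IsFieldMorphismFamily 𝓐 𝓑 χ ∧
          ∀ v ∈ V, ∀ a ∈ F, ‖φ v (a v) - χ v (a v)‖ < ε) →
      IsFieldMorphismFamily 𝓐 𝓑 φ := by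
    intro h a ha
    apply h𝓑.uniformly_closed
    intro ε hε
    have hx : ∀ x : X, ∃ V : Set X, IsOpen V ∧ x ∈ V ∧
        ∃ χ : Π x, A x →⋆ₙₐ[ℂ] B x, IsFieldMorphismFamily 𝓐 𝓑 χ ∧
          ∀ v ∈ V, ‖φ v (a v) - χ v (a v)‖ < ε / 2 := by
      intro x
      obtain ⟨V, hVo, hxV, χ, hχ, hb⟩ := h x {a} (by simpa using ha) (ε / 2) (by linarith)
      exact ⟨V, hVo, hxV, χ, hχ, fun v hv => hb v hv a (Finset.mem_singleton_self a)⟩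
    choose V hVo hxV χ hχ hb using hx
    obtain ⟨t, ht⟩ := isCompact_univ.elim_finite_subcover V hVo
      (fun x _ => Set.mem_iUnion.2 ⟨x, hxV x⟩)
    obtain ⟨f, hf⟩ := PartitionOfUnity.exists_isSubordinate (s := (Set.univ : Set X))
      isClosed_univ (fun i : t => V i) (fun i => hVo i)
      (by
        intro x _
        obtain ⟨i, hi, hxi⟩ := Set.mem_iUnion₂.1 (ht (Set.mem_univ x))
        exact Set.mem_iUnion.2 ⟨⟨i, hi⟩, hxi⟩)
    refine ⟨fun x => ∑ i : t, ((f i x : ℝ) : ℂ) • χ i x (a x), ?_, ?_⟩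
    · exact aux_finsetSum_mem h𝓑 Finset.univ
        (fun i : t => fun x => ((f i x : ℝ) : ℂ) • χ i x (a x))
        (fun i _ => h𝓑.contMul_mem
          ⟨fun x => ((f i x : ℝ) : ℂ), Complex.continuous_ofReal.comp (f i).continuous⟩
          _ (hχ i a ha))
    · intro x
      have hsum : ∑ i : t, f i x = 1 := by
        have := f.sum_eq_one (Set.mem_univ x)
        rwa [finsum_eq_sum_of_fintype] at this
      have h1 : φ x (a x) = ∑ i : t, ((f i x : ℝ) : ℂ) • φ x (a x) := by
        rw [← Finset.sum_smul]
        norm_cast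
        rw [hsum]
        norm_num
      have h2 : φ x (a x) - ∑ i : t, ((f i x : ℝ) : ℂ) • χ i x (a x)
          = ∑ i : t, ((f i x : ℝ) : ℂ) • (φ x (a x) - χ i x (a x)) := by
        conv_lhs => rw [h1]
        rw [← Finset.sum_sub_distrib]
        simp [smul_sub]
      calc ‖φ x (a x) - ∑ i : t, ((f i x : ℝ) : ℂ) • χ i x (a x)‖
          = ‖∑ i : t, ((f i x : ℝ) : ℂ) • (φ x (a x) - χ i x (a x))‖ := by rw [h2]
        _ ≤ ∑ i : t, ‖((f i x : ℝ) : ℂ) • (φ x (a x) - χ i x (a x))‖ :=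
            norm_sum_le _ _
        _ = ∑ i : t, f i x * ‖φ x (a x) - χ i x (a x)‖ := by
            refine Finset.sum_congr rfl fun i _ => ?_
            rw [norm_smul, Complex.norm_real, Real.norm_eq_abs,
              abs_of_nonneg (f.nonneg i x)]
        _ ≤ ∑ i : t, f i x * (ε / 2) := by
            refine Finset.sum_le_sum fun i _ => ?_
            by_cases hfi : f i x = 0
            · simp [hfi]
            · have hmem : x ∈ V i := hf i (subset_closure hfi)
              exact mul_le_mul_of_nonneg_left (le_of_lt (hb i x hmem)) (f.nonneg i x)
        _ = ε / 2 := by rw [← Finset.sum_mul, hsum, one_mul]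
        _ < ε := by linarith
  refine ⟨⟨?_, key21⟩, ?_, ?_⟩
  · -- (i) → (ii)
    intro hφ x F hF ε hε
    exact ⟨Set.univ, isOpen_univ, Set.mem_univ x, φ, hφ,
      fun v _ a _ => by simpa using hε⟩
  · -- (i) → (iii)
    intro hφ
    rw [homBundleTopology, continuous_generateFrom_iff]
    rintro S ⟨V, χ, F, ε, hVo, hχ, hF, hε, rfl⟩
    have heq : (fun x => (⟨x, φ x⟩ : Σ x, A x →⋆ₙₐ[ℂ] B x)) ⁻¹'
        { p : Σ x, A x →⋆ₙₐ[ℂ] B x |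
            p.1 ∈ V ∧ ∀ a ∈ F, ‖p.2 (a p.1) - χ p.1 (a p.1)‖ < ε } =
        V ∩ ⋂ a ∈ F, { x | ‖φ x (a x) - χ x (a x)‖ < ε } := by
      ext x
      simp [Set.mem_iInter]
    rw [heq]
    refine hVo.inter (isOpen_biInter_finset fun a haF => ?_)
    have hmem : (fun x => φ x (a x) - χ x (a x)) ∈ 𝓑 := by
      have h2 := h𝓑.add_mem _ (hφ a (hF haF)) _ (h𝓑.neg_mem _ (hχ a (hF haF)))
      convert h2 using 1
      funext x
      simp [sub_eq_add_neg]
    exact isOpen_lt (h𝓑.norm_continuous _ hmem) continuous_const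
  · -- PP ∧ (iii) → (ii)
    intro hPP hcont x F hF ε hε
    obtain ⟨χ, hχ, hχx⟩ := hPP x (φ x)
    have hSopen : @IsOpen _ (homBundleTopology 𝓐 𝓑)
        { p : Σ x, A x →⋆ₙₐ[ℂ] B x |
            p.1 ∈ Set.univ ∧ ∀ a ∈ F, ‖p.2 (a p.1) - χ p.1 (a p.1)‖ < ε } :=
      TopologicalSpace.isOpen_generateFrom_of_mem
        ⟨Set.univ, χ, F, ε, isOpen_univ, hχ, hF, hε, rfl⟩
    have hpre := @Continuous.isOpen_preimage X _ _ (homBundleTopology 𝓐 𝓑)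
      _ hcont _ hSopen
    refine ⟨_, hpre, ?_, χ, hχ, ?_⟩
    · exact ⟨Set.mem_univ x, fun a _ => by simp [hχx, hε]⟩
    · intro v hv a haF
      exact hv.2 a haF
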